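/- Let u, v : ℝᴺ → ℝ be continuous, u ≥ v ≥ 0, with u(x) = v(x) = 0 at some point x, and suppose there exist ν ∈ ℝᴺ with |ν| = 1, r₀ > 0 and a modulus m (m(r) → 0 as r → 0⁺) such that u is differentiable on the segment (x, x − r ν) for r < r₀ with |∇u| ≤ C + m(r) on B(x, r). If v is differentiable at x with ∇v(x) = −|∇v(x)| ν, then |∇v(x)| ≤ C. -/

import Mathlib

open Set Metric Filter Topology

/-- Comparison-of-gradients argument: if `u ≥ v ≥ 0` vanish at `x`, `u` is
differentiable along the segment `(x, x − rν)` with `‖∇u‖ ≤ C + m(r)` there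
(where `m(r) → 0` as `r → 0⁺`), and `v` is differentiable at `x` with
`∇v(x) = −‖∇v(x)‖ ν`, then `‖∇v(x)‖ ≤ C`. -/
theorem gradient_comparison {N : ℕ}
    (u v : EuclideanSpace ℝ (Fin N) → ℝ)
    (x ν : EuclideanSpace ℝ (Fin N)) (C r₀ : ℝ) (m : ℝ → ℝ)
    (hu_cont : Continuous u) (hv_cont : Continuous v)
    (hvu : ∀ y, v y ≤ u y) (hv0 : ∀ y, 0 ≤ v y)
    (hux : u x = 0) (hvx : v x = 0)
    (hν : ‖ν‖ = 1) (hr₀ : 0 < r₀)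
    (hm : Tendsto m (nhdsWithin 0 (Set.Ioi 0)) (nhds 0))
    (hudiff : ∀ r ∈ Set.Ioo (0 : ℝ) r₀, ∀ t ∈ Set.Ioo (0 : ℝ) r,
      DifferentiableAt ℝ u (x - t • ν))
    (hubound : ∀ r ∈ Set.Ioo (0 : ℝ) r₀, ∀ t ∈ Set.Ioo (0 : ℝ) r,
      ‖fderiv ℝ u (x - t • ν)‖ ≤ C + m r)
    (hvdiff : DifferentiableAt ℝ v x)
    (hvgrad : gradient v x = -(‖gradient v x‖) • ν) :
    ‖gradient v x‖ ≤ C := by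
  set L := ‖gradient v x‖ with hL
  -- the path r ↦ x - r • ν and its derivative -ν
  have hpath : ∀ t : ℝ, HasDerivAt (fun r : ℝ => x - r • ν) (-ν) t := by
    intro t
    have h1 : HasDerivAt (fun r : ℝ => r • ν) ((1:ℝ) • ν) t :=
      (hasDerivAt_id t).smul_const ν
    have h2 := (hasDerivAt_const t x).sub h1; rw [zero_sub, one_smul] at h2; exact h2
  -- h r := v (x - r • ν) has derivative L at 0
  have hinner : (inner ℝ (gradient v x) (-ν) : ℝ) = L := by
    rw [hvgrad]
    have : (inner ℝ ν ν : ℝ) = 1 := by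
      rw [real_inner_self_eq_norm_sq, hν]; norm_num
    simp [inner_smul_left, inner_smul_right, this, hν]
  have hh : HasDerivAt (fun r : ℝ => v (x - r • ν)) L 0 := by
    have hF : HasFDerivAt v ((InnerProductSpace.toDual ℝ _) (gradient v x) :
        EuclideanSpace ℝ (Fin N) →L[ℝ] ℝ) x := hvdiff.hasGradientAt.hasFDerivAt
    have h0 : HasFDerivAt v ((InnerProductSpace.toDual ℝ _) (gradient v x) :
        EuclideanSpace ℝ (Fin N) →L[ℝ] ℝ) ((fun r : ℝ => x - r • ν) 0) := by
      simpa using hF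
    have := h0.comp_hasDerivAt 0 (hpath 0)
    rw [← hinner]; exact this
  -- slope tendsto L along 𝓝[>] 0
  have hslope : Tendsto (fun r : ℝ => v (x - r • ν) / r) (𝓝[>] (0:ℝ)) (𝓝 L) := by
    have := (hasDerivAt_iff_tendsto_slope.mp hh).mono_left
      (nhdsWithin_mono _ (fun y hy => ne_of_gt hy : Set.Ioi (0:ℝ) ⊆ {(0:ℝ)}ᶜ))
    have heq : ∀ r : ℝ, slope (fun r : ℝ => v (x - r • ν)) 0 r = v (x - r • ν) / r := by
      intro r
      simp [slope_def_field, hvx, div_eq_inv_mul]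
    rw [show (fun r : ℝ => v (x - r • ν) / r) = slope (fun r : ℝ => v (x - r • ν)) 0 by
      funext r; simp [heq]]
    exact this
  -- MVT bound: for r ∈ (0, r₀), v(x - rν) ≤ r (C + m r)
  have hbound : ∀ r ∈ Set.Ioo (0:ℝ) r₀, v (x - r • ν) / r ≤ C + m r := by
    intro r hr
    obtain ⟨hr0, hrr⟩ := hr
    set g : ℝ → ℝ := fun t => u (x - t • ν) with hg
    have hgc : ContinuousOn g (Set.Icc 0 r) :=
      (hu_cont.comp ((continuous_const).sub ((continuous_id).smul continuous_const))).continuousOn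
    have hgd : ∀ t ∈ Set.Ioo (0:ℝ) r,
        HasDerivAt g (fderiv ℝ u (x - t • ν) (-ν)) t := by
      intro t ht
      exact ((hudiff r ⟨hr0, hrr⟩ t ht).hasFDerivAt).comp_hasDerivAt t (hpath t)
    obtain ⟨c, hc, hceq⟩ := exists_hasDerivAt_eq_slope g
      (fun t => fderiv ℝ u (x - t • ν) (-ν)) hr0 hgc hgd
    have hgr : g r = r * fderiv ℝ u (x - c • ν) (-ν) := by
      have h00 : g 0 = 0 := by simp [hg, hux]
      rw [hceq, h00]
      field_simp
      ring
    have hder : fderiv ℝ u (x - c • ν) (-ν) ≤ C + m r := by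
      calc fderiv ℝ u (x - c • ν) (-ν) ≤ ‖fderiv ℝ u (x - c • ν) (-ν)‖ := le_abs_self _
        _ ≤ ‖fderiv ℝ u (x - c • ν)‖ * ‖-ν‖ := (fderiv ℝ u (x - c • ν)).le_opNorm _
        _ = ‖fderiv ℝ u (x - c • ν)‖ := by simp [hν]
        _ ≤ C + m r := hubound r ⟨hr0, hrr⟩ c hc
    have hur : u (x - r • ν) ≤ r * (C + m r) := by
      rw [show u (x - r • ν) = g r from rfl, hgr]
      exact mul_le_mul_of_nonneg_left hder hr0.le
    rw [div_le_iff₀ hr0]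
    calc v (x - r • ν) ≤ u (x - r • ν) := hvu _
      _ ≤ r * (C + m r) := hur
      _ = (C + m r) * r := mul_comm _ _
  -- conclude
  have hCm : Tendsto (fun r => C + m r) (𝓝[>] (0:ℝ)) (𝓝 C) := by
    simpa using hm.const_add C
  refine le_of_tendsto_of_tendsto hslope hCm ?_
  filter_upwards [Ioo_mem_nhdsGT_of_mem (by simp [hr₀] : (0:ℝ) ∈ Set.Ico (0:ℝ) r₀)] with r hr
  exact hbound r hr
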